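/- The normal monomials x^a, a ∈ ℕ^{2n}, span the quantum symplectic space 𝒳 as a k-vector space; that is, every element of 𝒳 is a k-linear combination of normal monomials. -/

import Mathlib

noncomputable section

/-- The element `Ω_i = Σ_{j=i}^{n} q^{j-i} x_{-j} x_j` (with `Ω_{n+1} = 0`). -/
def Om {k X : Type*} [Field k] [Ring X] [Algebra k X]
    (q : k) (x : ℤ → X) (n : ℕ) (i : ℤ) : X :=
  ∑ j ∈ Finset.Icc i (n : ℤ), q ^ (j - i) • (x (-j) * x j)

/-- The increasing list of indices `-n, …, -1, 1, …, n`. -/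
def idxList (n : ℕ) : List ℤ :=
  ((List.range (2 * n + 1)).map (fun t => (t : ℤ) - n)).filter (fun i => i != 0)

/-- The normal monomial `x^a = x_{-n}^{a_{-n}} ⋯ x_n^{a_n}`. -/
def mono {X : Type*} [Monoid X] (x : ℤ → X) (n : ℕ) (a : ℤ → ℕ) : X :=
  ((idxList n).map (fun i => x i ^ a i)).prod

lemma coe_range_list (m : ℕ) :
    (↑(List.range m) : List ℤ) = (List.range m).map (fun t : ℕ => (t:ℤ)) := by
  simp
  induction List.range m with
  | nil => rfl
  | cons a l ih => simp [List.flatMap_cons, ih]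

lemma mem_idx (n : ℕ) (i : ℤ) : i ∈ idxList n ↔ (i ≠ 0 ∧ -(n:ℤ) ≤ i ∧ i ≤ n) := by
  constructor
  · intro h
    obtain ⟨hm, hf⟩ := List.mem_filter.1 h
    obtain ⟨t, ht, rfl⟩ := List.mem_map.1 hm
    simp at ht
    obtain ⟨s, hs, rfl⟩ := ht
    simp only [bne_iff_ne, ne_eq] at hf
    exact ⟨hf, by omega, by omega⟩
  · rintro ⟨h0, h1, h2⟩
    refine List.mem_filter.2 ⟨List.mem_map.2 ⟨i + n, ?_, by ring⟩, by simpa using h0⟩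
    simp
    exact ⟨(i + n).toNat, by omega, by omega⟩

lemma pairwise_idx (n : ℕ) : (idxList n).Pairwise (· < ·) := by
  refine List.Pairwise.sublist (List.filter_sublist) ?_
  rw [show ((↑(List.range (2*n+1)) : List ℤ)) = (List.range (2*n+1)).map (fun t : ℕ => (t:ℤ)) from coe_range_list _]
  rw [List.pairwise_map, List.pairwise_map]
  exact (List.pairwise_lt_range).imp (fun h => by omega)

/-- The digit-based measure on words used for the straightening induction. -/
def Mw (n : ℕ) : List ℤ → ℕ
  | [] => 0
  | a :: w => (a + n).toNat * (2*n+1) ^ w.length + Mw n w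

lemma Mw_append (n : ℕ) (u v : List ℤ) :
    Mw n (u ++ v) = Mw n u * (2*n+1) ^ v.length + Mw n v := by
  induction u with
  | nil => simp [Mw]
  | cons a u ih => simp [Mw, ih, List.length_append, pow_add]; ring

lemma Mdec (n : ℕ) (u v : List ℤ) (b c α β : ℤ)
    (hαb : α < b) (hα : -(n:ℤ) ≤ α) (hβ : β ≤ n) (hβ' : -(n:ℤ) ≤ β) :
    Mw n (u ++ α :: β :: v) < Mw n (u ++ b :: c :: v) := by
  rw [Mw_append, Mw_append]
  simp only [Mw, List.length_cons]
  have h1 : (α + n).toNat < (b + n).toNat := by omega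
  have h2 : (β + n).toNat < 2*n+1 := by omega
  set B := 2*n+1 with hB
  set L := v.length with hL
  have hpow : B ^ (L + 1) = B * B ^ L := by ring
  have key : (α + (n:ℤ)).toNat * B ^ (L+1) + ((β + n).toNat * B ^ L + Mw n v)
      < (b + (n:ℤ)).toNat * B ^ (L+1) + ((c + n).toNat * B ^ L + Mw n v) := by
    have hBpos : 0 < B ^ L := pow_pos (by omega) _
    have f1 : ((α + (n:ℤ)).toNat + 1) * B^(L+1) ≤ (b + (n:ℤ)).toNat * B^(L+1) :=
      Nat.mul_le_mul_right _ (by omega)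
    have f2 : ((β + (n:ℤ)).toNat + 1) * B^L ≤ B * B^L :=
      Nat.mul_le_mul_right _ (by omega)
    rw [add_mul, one_mul] at f1 f2
    nlinarith [f1, f2, hpow, hBpos]
  omega

lemma find_desc : ∀ w : List ℤ, w.Pairwise (· ≤ ·) ∨ ∃ u b c v, w = u ++ b :: c :: v ∧ c < b := by
  intro w
  induction w with
  | nil => left; simp
  | cons a w ih =>
    match w, ih with
    | [], _ => left; simp
    | b :: t, ih =>
      rcases lt_or_ge b a with h | h
      · right; exact ⟨[], a, b, t, rfl, h⟩
      · rcases ih with hc | ⟨u, b', c', v, heq, hlt⟩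
        · left
          rw [← List.isChain_iff_pairwise] at hc ⊢
          exact List.isChain_cons_cons.2 ⟨h, hc⟩
        · right; exact ⟨a :: u, b', c', v, by rw [heq]; rfl, hlt⟩

lemma keyL {X : Type*} [Monoid X] (x : ℤ → X) :
    ∀ (L : List ℤ), L.Pairwise (· < ·) → ∀ a ∈ L, ∀ b : ℤ → ℕ, (∀ j ∈ L, j < a → b j = 0) →
    x a * (L.map fun i => x i ^ b i).prod
      = (L.map fun i => x i ^ (b i + if i = a then 1 else 0)).prod := by
  intro L
  induction L with
  | nil => intro _ a ha; exact absurd ha List.not_mem_nil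
  | cons c L ih =>
    intro hpw a ha b hz
    have hcl : ∀ i ∈ L, c < i := (List.pairwise_cons.1 hpw).1
    simp only [List.map_cons, List.prod_cons]
    by_cases hac : a = c
    · rw [hac]
      rw [← mul_assoc, ← pow_succ']
      have hrest : (L.map fun i => x i ^ (b i + if i = c then 1 else 0)) = L.map fun i => x i ^ b i := by
        refine List.map_congr_left (fun i hi => ?_)
        have hci := hcl i hi
        rw [if_neg (by omega), add_zero]
      rw [hrest, if_pos rfl]
    · have haL : a ∈ L := (List.mem_cons.1 ha).resolve_left hac
      have hca : c < a := hcl a haL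
      rw [hz c List.mem_cons_self hca, if_neg (fun h => hac h.symm)]
      simp only [pow_zero, one_mul, add_zero]
      exact ih (List.pairwise_cons.1 hpw).2 a haL b
        (fun j hj hja => hz j (List.mem_cons_of_mem _ hj) hja)

lemma sorted_prod {X : Type*} [Monoid X] (x : ℤ → X) (n : ℕ) :
    ∀ w : List ℤ, w.Pairwise (· ≤ ·) → (∀ i ∈ w, i ∈ idxList n) →
      (w.map x).prod = mono x n (fun j => w.count j) := by
  intro w
  induction w with
  | nil =>
    intro _ _
    simp [mono, List.count_nil]
  | cons a w ih =>
    intro hpw hval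
    have hle : ∀ j ∈ w, a ≤ j := (List.pairwise_cons.1 hpw).1
    simp only [List.map_cons, List.prod_cons]
    rw [ih (List.pairwise_cons.1 hpw).2 (fun i hi => hval i (List.mem_cons_of_mem _ hi))]
    show x a * (((idxList n).map (fun i => x i ^ w.count i))).prod = _
    rw [keyL x (idxList n) (pairwise_idx n) a (hval a List.mem_cons_self)
      (fun j => w.count j)
      (fun j _ hja => List.count_eq_zero_of_not_mem (fun hjw => absurd (hle j hjw) (by omega)))]
    show _ = (((idxList n).map (fun i => x i ^ (a :: w).count i))).prod
    refine congrArg List.prod (List.map_congr_left (fun i _ => ?_))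
    rw [List.count_cons]
    rcases eq_or_ne i a with h | h
    · simp [h]
    · simp [h, Ne.symm h]

lemma prod_split {X : Type*} [Monoid X] (x : ℤ → X) (u v : List ℤ) (a b : ℤ) :
    ((u ++ a :: b :: v).map x).prod = (u.map x).prod * (x a * (x b * (v.map x).prod)) := by
  simp

lemma word_mem {k X : Type*} [Field k] [Ring X] [Algebra k X]
    (n : ℕ) (q : k) (x : ℤ → X)
    (hrel1 : ∀ i j : ℤ, -(n : ℤ) ≤ i → j ≤ n → i ≠ 0 → j ≠ 0 → i < j → j ≠ -i →
      x j * x i = q • (x i * x j))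
    (hrel2 : ∀ i : ℤ, 1 ≤ i → i ≤ n →
      x i * x (-i) = (q ^ 2) • (x (-i) * x i) + (q ^ 2 * (q - q⁻¹)) • Om q x n (i + 1)) :
    ∀ N (w : List ℤ), Mw n w = N → (∀ i ∈ w, i ∈ idxList n) →
      (w.map x).prod ∈ Submodule.span k (Set.range (mono x n)) := by
  intro N
  induction N using Nat.strong_induction_on with
  | _ N IH =>
    intro w hM hval
    rcases find_desc w with hs | ⟨u, b, c, v, rfl, hcb⟩
    · rw [sorted_prod x n w hs hval]
      exact Submodule.subset_span ⟨_, rfl⟩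
    · have hvu : ∀ i ∈ u, i ∈ idxList n := fun i hi => hval i (by simp [hi])
      have hvv : ∀ i ∈ v, i ∈ idxList n := fun i hi => hval i (by simp [hi])
      have hb := (mem_idx n b).1 (hval b (by simp))
      have hc := (mem_idx n c).1 (hval c (by simp))
      by_cases hbc : b = -c
      · -- hard case: c = -b with b > 0
        have hcb' : c = -b := by omega
        subst hcb'
        have hb1 : 1 ≤ b := by omega
        have hbn : b ≤ (n : ℤ) := hb.2.2
        have hx := hrel2 b hb1 hbn
        rw [prod_split, ← mul_assoc (x b), hx]
        have expand :
            (u.map x).prod * ((((q ^ 2) • (x (-b) * x b) + (q ^ 2 * (q - q⁻¹)) • Om q x n (b + 1))) * (v.map x).prod)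
            = (q ^ 2) • ((u ++ (-b) :: b :: v).map x).prod
              + (q ^ 2 * (q - q⁻¹)) • ∑ j ∈ Finset.Icc (b+1) (n : ℤ),
                  q ^ (j - (b+1)) • ((u ++ (-j) :: j :: v).map x).prod := by
          simp only [Om, prod_split, Finset.sum_mul, Finset.mul_sum, add_mul, mul_add,
            smul_mul_assoc, mul_smul_comm, mul_assoc]
        rw [expand]
        refine Submodule.add_mem _ (Submodule.smul_mem _ _ ?_) (Submodule.smul_mem _ _
          (Submodule.sum_mem _ (fun j hj => Submodule.smul_mem _ _ ?_)))
        · refine IH _ (hM ▸ Mdec n u v b (-b) (-b) b (by omega) (by omega) hbn (by omega)) _ rfl ?_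
          intro i hi
          simp only [List.mem_append, List.mem_cons] at hi
          rcases hi with h | h | h | h
          · exact hvu i h
          · exact (mem_idx n i).2 (by subst h; refine ⟨by omega, by omega, by omega⟩)
          · exact (mem_idx n i).2 (by subst h; exact ⟨by omega, by omega, hbn⟩)
          · exact hvv i h
        · simp only [Finset.mem_Icc] at hj
          refine IH _ (hM ▸ Mdec n u v b (-b) (-j) j (by omega) (by omega) (by omega) (by omega)) _ rfl ?_
          intro i hi
          simp only [List.mem_append, List.mem_cons] at hi
          rcases hi with h | h | h | h
          · exact hvu i h
          · exact (mem_idx n i).2 (by subst h; refine ⟨by omega, by omega, by omega⟩)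
          · exact (mem_idx n i).2 (by subst h; refine ⟨by omega, by omega, by omega⟩)
          · exact hvv i h
      · -- swap case
        have hx : x b * x c = q • (x c * x b) :=
          hrel1 c b hc.2.1 hb.2.2 hc.1 hb.1 hcb (by omega)
        rw [prod_split, ← mul_assoc (x b), hx]
        have expand : (u.map x).prod * ((q • (x c * x b)) * (v.map x).prod)
            = q • ((u ++ c :: b :: v).map x).prod := by
          simp only [prod_split, smul_mul_assoc, mul_smul_comm, mul_assoc]
        rw [expand]
        refine Submodule.smul_mem _ _ (IH _ (hM ▸ Mdec n u v b c c b hcb hc.2.1 hb.2.2 hb.2.1) _ rfl ?_)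
        intro i hi
        simp only [List.mem_append, List.mem_cons] at hi
        rcases hi with h | h | h | h
        · exact hvu i h
        · exact hval i (by simp [h])
        · exact hval i (by simp [h])
        · exact hvv i h

/-- The normal monomials span the quantum symplectic space: in any algebra generated by
elements `x_i` (`i ∈ I`) subject to the defining relations of `𝒳` (in particular in the
presented algebra `𝒳` itself), every element is a `k`-linear combination of the normal
monomials `x^a`. -/
theorem stmt8 {k X : Type*} [Field k] [CharZero k] [Ring X] [Algebra k X]
    (n : ℕ) (hn : 2 ≤ n) (q : k) (hq : q ≠ 0) (hroot : ∀ r : ℕ, r ≠ 0 → q ^ r ≠ 1)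
    (x : ℤ → X)
    (hrel1 : ∀ i j : ℤ, -(n : ℤ) ≤ i → j ≤ n → i ≠ 0 → j ≠ 0 → i < j → j ≠ -i →
      x j * x i = q • (x i * x j))
    (hrel2 : ∀ i : ℤ, 1 ≤ i → i ≤ n →
      x i * x (-i) = (q ^ 2) • (x (-i) * x i) + (q ^ 2 * (q - q⁻¹)) • Om q x n (i + 1))
    (hgen : Algebra.adjoin k (x '' {i : ℤ | i ≠ 0 ∧ -(n : ℤ) ≤ i ∧ i ≤ n}) = ⊤) :
    ∀ u : X, u ∈ Submodule.span k (Set.range (mono x n)) := by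
  intro u
  have hu : u ∈ Subalgebra.toSubmodule
      (Algebra.adjoin k (x '' {i : ℤ | i ≠ 0 ∧ -(n : ℤ) ≤ i ∧ i ≤ n})) := by
    rw [hgen]; simp
  rw [Algebra.adjoin_eq_span] at hu
  refine Submodule.span_le.2 ?_ hu
  intro y hy
  obtain ⟨l, hl, rfl⟩ := Submonoid.exists_list_of_mem_closure hy
  suffices h : ∃ w : List ℤ, (∀ i ∈ w, i ∈ idxList n) ∧ w.map x = l by
    obtain ⟨w, hw, rfl⟩ := h
    exact word_mem n q x hrel1 hrel2 (Mw n w) w rfl hw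
  clear hy
  induction l with
  | nil => exact ⟨[], by simp, rfl⟩
  | cons y l ih =>
    obtain ⟨w, hw1, hw2⟩ := ih (fun z hz => hl z (List.mem_cons_of_mem _ hz))
    obtain ⟨i, hi, hxi⟩ := hl y List.mem_cons_self
    refine ⟨i :: w, ?_, by simp [hw2, hxi]⟩
    intro j hj
    rcases List.mem_cons.1 hj with h | h
    · exact (mem_idx n j).2 (h ▸ hi)
    · exact hw1 j h
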